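/- Let V be a finite vertex set, let k be a positive integer, and let C be a spanning subgraph of a graph G on V such that κ(x,y;C) ≥ min{κ(x,y;G), k} for all vertices x, y ∈ V. Then for every l-separator S of C with l < k, the graphs C − S and G − S have the same connected components; that is, for all vertices u, v ∈ V \ S, u and v are connected in C − S if and only if they are connected in G − S. -/

import Mathlib

/-- The local vertex-connectivity `κ(x,y;G)`: the maximum number of pairwise
internally vertex-disjoint paths between `x` and `y` in `G`. -/
noncomputable def localVertexConn {V : Type*} (G : SimpleGraph V) (x y : V) : ℕ :=
  sSup {n : ℕ | ∃ P : Fin n → G.Path x y, Function.Injective P ∧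
    Pairwise fun i j => ∀ v, v ∈ (P i).1.support → v ∈ (P j).1.support → v = x ∨ v = y}

/-- `S` is an `l`-separator of `G`: `|S| = l` and removing the vertices of `S`
(together with all incident edges) leaves a graph with more connected components
than `G`. -/
def IsSeparator {V : Type*} (G : SimpleGraph V) (S : Finset V) (l : ℕ) : Prop :=
  S.card = l ∧
    Nat.card G.ConnectedComponent <
      Nat.card (G.induce ((S : Set V)ᶜ)).ConnectedComponent

section Aux

variable {V : Type*}

/-- The defining set of `localVertexConn` contains `0`. -/
lemma lvc_zero_mem (G : SimpleGraph V) (x y : V) :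
    0 ∈ {n : ℕ | ∃ P : Fin n → G.Path x y, Function.Injective P ∧
      Pairwise fun i j => ∀ v, v ∈ (P i).1.support → v ∈ (P j).1.support → v = x ∨ v = y} := by
  refine ⟨fun i => i.elim0, fun i => i.elim0, fun i => i.elim0⟩

/-- The defining set of `localVertexConn` is bounded above. -/
lemma lvc_bddAbove [Fintype V] (G : SimpleGraph V) (x y : V) :
    BddAbove {n : ℕ | ∃ P : Fin n → G.Path x y, Function.Injective P ∧
      Pairwise fun i j => ∀ v, v ∈ (P i).1.support → v ∈ (P j).1.support → v = x ∨ v = y} := by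
  classical
  refine ⟨Fintype.card (G.Path x y), fun n hn => ?_⟩
  obtain ⟨P, hinj, -⟩ := hn
  simpa using Fintype.card_le_of_injective P hinj

lemma le_lvc [Fintype V] (G : SimpleGraph V) (x y : V) {n : ℕ}
    (P : Fin n → G.Path x y) (hinj : Function.Injective P)
    (hpair : Pairwise fun i j => ∀ v,
      v ∈ (P i).1.support → v ∈ (P j).1.support → v = x ∨ v = y) :
    n ≤ localVertexConn G x y :=
  le_csSup (lvc_bddAbove G x y) ⟨P, hinj, hpair⟩

lemma lvc_mem [Fintype V] (G : SimpleGraph V) (x y : V) :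
    localVertexConn G x y ∈ {n : ℕ | ∃ P : Fin n → G.Path x y, Function.Injective P ∧
      Pairwise fun i j => ∀ v, v ∈ (P i).1.support → v ∈ (P j).1.support → v = x ∨ v = y} :=
  Nat.sSup_mem ⟨0, lvc_zero_mem G x y⟩ (lvc_bddAbove G x y)

/-- A walk whose support stays inside `s` yields reachability in the induced graph. -/
lemma reachable_induce_of_walk (G : SimpleGraph V) (s : Set V) {a b : V}
    (p : G.Walk a b) (hp : ∀ v ∈ p.support, v ∈ s) (ha : a ∈ s) (hb : b ∈ s) :
    (G.induce s).Reachable ⟨a, ha⟩ ⟨b, hb⟩ := by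
  induction p with
  | nil => exact SimpleGraph.Reachable.refl _
  | @cons a c b hadj q ih =>
    have hc : c ∈ s := hp c (by simp)
    have h1 : (G.induce s).Adj ⟨a, ha⟩ ⟨c, hc⟩ := by
      simp [SimpleGraph.comap_adj, hadj]
    exact (SimpleGraph.Adj.reachable h1).trans
      (ih (fun v hv => hp v (by simp [hv])) hc hb)

end Aux

/-- If `C` is a spanning subgraph of `G` with `κ(x,y;C) ≥ min{κ(x,y;G), k}` for all
vertices `x, y`, then for every `l`-separator `S` of `C` with `l < k`, the graphs
`C − S` and `G − S` have the same connected components: for all `u, v ∈ V \ S`,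
`u` and `v` are connected in `C − S` iff they are connected in `G − S`. -/
theorem stmt_2 {V : Type*} [Fintype V] (k : ℕ) (hk : 0 < k)
    (G C : SimpleGraph V) (hCG : C ≤ G)
    (hκ : ∀ x y : V, min (localVertexConn G x y) k ≤ localVertexConn C x y)
    (S : Finset V) (l : ℕ) (hl : l < k) (hsep : IsSeparator C S l) :
    ∀ (u v : V) (hu : u ∈ ((S : Set V))ᶜ) (hv : v ∈ ((S : Set V))ᶜ),
      (C.induce ((S : Set V)ᶜ)).Reachable ⟨u, hu⟩ ⟨v, hv⟩ ↔
        (G.induce ((S : Set V)ᶜ)).Reachable ⟨u, hu⟩ ⟨v, hv⟩ := by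
  classical
  obtain ⟨hcard, -⟩ := hsep
  -- the key step: a `G`-edge between two vertices outside `S` joins vertices
  -- in the same component of `C − S`.
  have key : ∀ (u w : V) (hu : u ∈ ((S : Set V))ᶜ) (hw : w ∈ ((S : Set V))ᶜ),
      G.Adj u w → (C.induce ((S : Set V)ᶜ)).Reachable ⟨u, hu⟩ ⟨w, hw⟩ := by
    intro u w hu hw hadj
    by_contra hreach
    have huS : u ∉ S := by simpa using hu
    have hwS : w ∉ S := by simpa using hw
    -- every walk from u to w in C meets S
    have hhit : ∀ p : C.Walk u w, ∃ s ∈ S, s ∈ p.support := by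
      intro p
      by_contra h
      push_neg at h
      exact hreach (reachable_induce_of_walk C _ p
        (fun v hv => by
          simp only [Set.mem_compl_iff, Finset.mem_coe]
          intro hvS; exact absurd hv (by simpa using h v hvS)) hu hw)
    -- κ(u,w;C) ≤ |S|
    have hCle : localVertexConn C u w ≤ S.card := by
      refine csSup_le ⟨0, lvc_zero_mem C u w⟩ ?_
      rintro n ⟨P, hinj, hpair⟩
      choose f hfS hfsupp using fun i => hhit (P i).1
      have hfinj : Function.Injective f := by
        intro i j hij
        by_contra hne
        rcases hpair hne (f i) (hfsupp i) (hij ▸ hfsupp j) with h | h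
        · exact huS (h ▸ hfS i)
        · exact hwS (h ▸ hfS i)
      have : Fintype.card (Fin n) ≤ Fintype.card {x // x ∈ S} :=
        Fintype.card_le_of_injective (fun i => ⟨f i, hfS i⟩)
          (fun i j h => hfinj (by simpa using h))
      simpa using this
    -- a maximum family in C, mapped into G, together with the edge u-w,
    -- gives κ(u,w;G) ≥ κ(u,w;C) + 1
    set m := localVertexConn C u w with hm
    obtain ⟨P, hinj, hpair⟩ := lvc_mem C u w
    have hsupport : ∀ i : Fin m, ((P i).1.mapLe hCG).support = (P i).1.support := by
      intro i
      have hid : ⇑(SimpleGraph.Hom.ofLE hCG) = id := rfl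
      simp [SimpleGraph.Walk.mapLe, SimpleGraph.Walk.support_map, hid]
    let Q : Fin (m + 1) → G.Path u w := fun i =>
      if h : (i : ℕ) < m then
        ⟨(P ⟨i, h⟩).1.mapLe hCG, SimpleGraph.Walk.IsPath.mapLe hCG (P ⟨i, h⟩).2⟩
      else SimpleGraph.Path.singleton hadj
    have hQsupp : ∀ (i : Fin (m + 1)) (h : (i : ℕ) < m),
        (Q i).1.support = (P ⟨i, h⟩).1.support := by
      intro i h; simp only [Q, dif_pos h]; exact hsupport _
    have hQsing : ∀ (i : Fin (m + 1)), ¬ (i : ℕ) < m →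
        (Q i).1.support = [u, w] := by
      intro i h
      simp only [Q, dif_neg h, SimpleGraph.Path.singleton,
        SimpleGraph.Walk.support_cons, SimpleGraph.Walk.support_nil]
    have hSin : ∀ (i : Fin (m + 1)) (h : (i : ℕ) < m), ∃ s ∈ S, s ∈ (Q i).1.support := by
      intro i h
      obtain ⟨s, hs, hs'⟩ := hhit (P ⟨i, h⟩).1
      exact ⟨s, hs, by rw [hQsupp i h]; exact hs'⟩
    have hQinj : Function.Injective Q := by
      intro i j hij
      by_cases hi : (i : ℕ) < m <;> by_cases hj : (j : ℕ) < m
      · have h2 : P ⟨i, hi⟩ = P ⟨j, hj⟩ := by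
          simp only [Q, dif_pos hi, dif_pos hj] at hij
          ext1
          exact SimpleGraph.Walk.map_injective_of_injective
            (f := SimpleGraph.Hom.ofLE hCG)
            (fun a b h => by simpa using h) u w (congrArg Subtype.val hij)
        have h3 := hinj h2
        exact Fin.ext (by simpa using congrArg (fun x : Fin m => (x : ℕ)) h3)
      · obtain ⟨s, hs, hs'⟩ := hSin i hi
        rw [hij, hQsing j hj] at hs'
        simp only [List.mem_cons, List.mem_singleton, List.not_mem_nil, or_false] at hs'
        rcases hs' with h | h
        · exact absurd (h ▸ hs) huS
        · exact absurd (h ▸ hs) hwS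
      · obtain ⟨s, hs, hs'⟩ := hSin j hj
        rw [← hij, hQsing i hi] at hs'
        simp only [List.mem_cons, List.mem_singleton, List.not_mem_nil, or_false] at hs'
        rcases hs' with h | h
        · exact absurd (h ▸ hs) huS
        · exact absurd (h ▸ hs) hwS
      · exact Fin.ext (by omega)
    have hQpair : Pairwise fun i j => ∀ v,
        v ∈ (Q i).1.support → v ∈ (Q j).1.support → v = u ∨ v = w := by
      intro i j hne v hvi hvj
      by_cases hi : (i : ℕ) < m <;> by_cases hj : (j : ℕ) < m
      · rw [hQsupp i hi] at hvi
        rw [hQsupp j hj] at hvj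
        have hne' : (⟨(i : ℕ), hi⟩ : Fin m) ≠ ⟨(j : ℕ), hj⟩ := by
          intro h
          exact hne (Fin.ext (by simpa using congrArg (fun x : Fin m => (x : ℕ)) h))
        exact hpair hne' v hvi hvj
      · rw [hQsing j hj] at hvj
        simp only [List.mem_cons, List.mem_singleton, List.not_mem_nil, or_false] at hvj
        exact hvj
      · rw [hQsing i hi] at hvi
        simp only [List.mem_cons, List.mem_singleton, List.not_mem_nil, or_false] at hvi
        exact hvi
      · exact absurd (Fin.ext (by omega : (i : ℕ) = (j : ℕ))) hne
    have hGge : m + 1 ≤ localVertexConn G u w := le_lvc G u w Q hQinj hQpair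
    have hmin := hκ u w
    rw [← hm] at hmin
    rcases min_le_iff.mp hmin with h | h
    · omega
    · have hml : m ≤ l := hcard ▸ hCle
      omega
  -- conclude componentwise equality
  have main : ∀ (a b : {x // x ∈ ((S : Set V))ᶜ}),
      (G.induce ((S : Set V)ᶜ)).Walk a b → (C.induce ((S : Set V)ᶜ)).Reachable a b := by
    intro a b p
    induction p with
    | nil => exact SimpleGraph.Reachable.refl _
    | @cons x y b hadj q ih =>
      have h1 : (C.induce ((S : Set V)ᶜ)).Reachable ⟨x.1, x.2⟩ ⟨y.1, y.2⟩ :=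
        key x.1 y.1 x.2 y.2 hadj
      exact (by simpa using h1 : (C.induce ((S : Set V)ᶜ)).Reachable x y).trans ih
  intro u v hu hv
  constructor
  · intro h
    refine h.mono ?_
    intro a b hab
    exact hCG hab
  · intro h
    obtain ⟨p⟩ := h
    exact main _ _ p
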